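/- Let m > 0 and λ < 0 be real numbers, set μ = √(−λ/m), and let h : ℝ → ℝ be a differentiable function satisfying h′(t) = h(t)²/m + λ for every t ∈ ℝ. Then either h is the constant function √(−mλ), or h is the constant function −√(−mλ), or there exists a constant a ∈ ℝ such that h(t) = −√(−mλ)·tanh(μ·t + a) for every t ∈ ℝ. -/

import Mathlib

private lemma ode_exp_aux (k : ℝ) (v : ℝ → ℝ) (hv : Differentiable ℝ v)
    (hode : ∀ t, deriv v t = k * v t) : ∀ t, v t = v 0 * Real.exp (k * t) := by
  intro t
  have hd : ∀ s : ℝ, HasDerivAt (fun s => v s * Real.exp (-k * s)) 0 s := by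
    intro s
    have h1 : HasDerivAt v (k * v s) s := hode s ▸ (hv s).hasDerivAt
    have h2 : HasDerivAt (fun s : ℝ => Real.exp (-k * s)) (Real.exp (-k * s) * (-k * 1)) s :=
      ((hasDerivAt_id s).const_mul (-k)).exp
    have h3 : HasDerivAt (fun s => v s * Real.exp (-k * s)) _ s := h1.mul h2
    convert h3 using 1
    ring
  have hconst : v t * Real.exp (-k * t) = v 0 * Real.exp (-k * 0) :=
    is_const_of_deriv_eq_zero (fun s => (hd s).differentiableAt) (fun s => (hd s).deriv) t 0
  have h0 : v t * Real.exp (-k * t) = v 0 := by simpa using hconst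
  have hee : Real.exp (-k * t) * Real.exp (k * t) = 1 := by
    rw [← Real.exp_add]; ring_nf; exact Real.exp_zero
  calc v t = v t * (Real.exp (-k * t) * Real.exp (k * t)) := by rw [hee, mul_one]
    _ = (v t * Real.exp (-k * t)) * Real.exp (k * t) := by ring
    _ = v 0 * Real.exp (k * t) := by rw [h0]

private lemma ode_linear2_aux (μ : ℝ) (hμ : 0 < μ) (u : ℝ → ℝ) (hu : Differentiable ℝ u)
    (hu' : Differentiable ℝ (deriv u))
    (hode : ∀ t, deriv (deriv u) t = μ ^ 2 * u t) :
    ∃ A B : ℝ, ∀ t, u t = A * Real.exp (μ * t) + B * Real.exp (-(μ * t)) := by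
  set v : ℝ → ℝ := fun t => deriv u t - μ * u t with hv_def
  have hv : Differentiable ℝ v := hu'.sub (hu.const_mul μ)
  have hvode : ∀ t, deriv v t = (-μ) * v t := by
    intro t
    have hd : HasDerivAt v (deriv (deriv u) t - μ * deriv u t) t :=
      ((hu' t).hasDerivAt).sub (((hu t).hasDerivAt).const_mul μ)
    rw [hd.deriv, hode t]
    simp only [hv_def]
    ring
  have hveq := ode_exp_aux (-μ) v hv hvode
  set q : ℝ → ℝ := fun t => u t + (v 0 / (2 * μ)) * Real.exp ((-μ) * t) with hq_def
  have hexpD : Differentiable ℝ (fun t : ℝ => Real.exp ((-μ) * t)) :=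
    fun t => (((hasDerivAt_id t).const_mul (-μ)).exp).differentiableAt
  have hq : Differentiable ℝ q := hu.add (hexpD.const_mul _)
  have hqode : ∀ t, deriv q t = μ * q t := by
    intro t
    have hd : HasDerivAt q
        (deriv u t + v 0 / (2 * μ) * (Real.exp ((-μ) * t) * ((-μ) * 1))) t :=
      ((hu t).hasDerivAt).add
        ((((hasDerivAt_id t).const_mul (-μ)).exp).const_mul (v 0 / (2 * μ)))
    rw [hd.deriv]
    have hvt : deriv u t - μ * u t = v 0 * Real.exp ((-μ) * t) := by
      have := hveq t; simpa [hv_def] using this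
    have hder : deriv u t = μ * u t + v 0 * Real.exp ((-μ) * t) := by linarith
    simp only [hq_def]
    rw [hder]
    field_simp
    ring
  have hqeq := ode_exp_aux μ q hq hqode
  refine ⟨q 0, -(v 0 / (2 * μ)), fun t => ?_⟩
  have hqt := hqeq t
  simp only [hq_def] at hqt
  have hrw : (-μ) * t = -(μ * t) := by ring
  rw [hrw] at hqt
  linarith

/-- **Classification of global solutions of the Riccati ODE `h′ = h²/m + λ`, `λ < 0`.**
Every differentiable `h : ℝ → ℝ` with `h′(t) = h(t)²/m + λ` everywhere is either the
constant `√(−mλ)`, the constant `−√(−mλ)`, or `h(t) = −√(−mλ)·tanh(μ·t + a)` with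
`μ = √(−λ/m)` and some constant `a`. -/
theorem riccati_global_solutions_classification
    (m lam : ℝ) (hm : 0 < m) (hlam : lam < 0)
    (μ : ℝ) (hμ : μ = Real.sqrt (-lam / m))
    (h : ℝ → ℝ) (hdiff : Differentiable ℝ h)
    (hode : ∀ t : ℝ, deriv h t = h t ^ 2 / m + lam) :
    (∀ t : ℝ, h t = Real.sqrt (-m * lam)) ∨
    (∀ t : ℝ, h t = -Real.sqrt (-m * lam)) ∨
    (∃ a : ℝ, ∀ t : ℝ, h t = -Real.sqrt (-m * lam) * Real.tanh (μ * t + a)) := by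
  have hm' : m ≠ 0 := ne_of_gt hm
  have hμpos : 0 < μ := hμ ▸ Real.sqrt_pos.mpr (div_pos (neg_pos.mpr hlam) hm)
  have hμ2 : μ ^ 2 = -lam / m := by
    rw [hμ]; exact Real.sq_sqrt (le_of_lt (div_pos (neg_pos.mpr hlam) hm))
  have hc : Real.sqrt (-m * lam) = m * μ := by
    have h1 : -m * lam = m ^ 2 * (-lam / m) := by field_simp
    rw [h1, Real.sqrt_mul (sq_nonneg m), Real.sqrt_sq hm.le, hμ]
  set F : ℝ → ℝ := fun t => ∫ s in (0:ℝ)..t, h s with hF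
  have hFd : ∀ t, HasDerivAt F (h t) t :=
    fun t => (hdiff.continuous.integral_hasStrictDerivAt 0 t).hasDerivAt
  set u : ℝ → ℝ := fun t => Real.exp (-(F t) / m) with hu_def
  have hupos : ∀ t, 0 < u t := fun t => Real.exp_pos _
  have hud : ∀ t, HasDerivAt u ((-(h t) / m) * u t) t := by
    intro t
    have h1 : HasDerivAt (fun t => -(F t) / m) (-(h t) / m) t := ((hFd t).neg).div_const m
    have h2 := h1.exp
    simp only [hu_def]
    convert h2 using 1
    ring
  have huD : Differentiable ℝ u := fun t => (hud t).differentiableAt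
  have huderiv : deriv u = fun t => (-(h t) / m) * u t := funext fun t => (hud t).deriv
  have hu'D : Differentiable ℝ (deriv u) := by
    rw [huderiv]; exact (hdiff.neg.div_const m).mul huD
  have hode2 : ∀ t, deriv (deriv u) t = μ ^ 2 * u t := by
    intro t
    rw [huderiv]
    have hd : HasDerivAt (fun t => (-(h t) / m) * u t)
        ((-(deriv h t) / m) * u t + (-(h t) / m) * ((-(h t) / m) * u t)) t :=
      (((hdiff t).hasDerivAt.neg.div_const m).mul (hud t))
    rw [hd.deriv, hode t, hμ2]
    field_simp
    ring
  obtain ⟨A, B, hAB⟩ := ode_linear2_aux μ hμpos u huD hu'D hode2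
  have hh : ∀ t, h t = -m * deriv u t / u t := by
    intro t
    rw [huderiv]
    field_simp [(hupos t).ne']
  have hEq : u = fun t => A * Real.exp (μ * t) + B * Real.exp (-(μ * t)) := funext hAB
  have hud2 : ∀ t, deriv u t = μ * A * Real.exp (μ * t) - μ * B * Real.exp (-(μ * t)) := by
    intro t
    rw [hEq]
    have h1 : HasDerivAt (fun t => A * Real.exp (μ * t) + B * Real.exp (-(μ * t)))
        (A * (Real.exp (μ * t) * (μ * 1)) + B * (Real.exp (-(μ * t)) * (-(μ * 1)))) t := by
      have e1 : HasDerivAt (fun t : ℝ => Real.exp (μ * t)) (Real.exp (μ * t) * (μ * 1)) t :=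
        ((hasDerivAt_id t).const_mul μ).exp
      have e2 : HasDerivAt (fun t : ℝ => Real.exp (-(μ * t))) (Real.exp (-(μ * t)) * (-(μ * 1))) t :=
        (((hasDerivAt_id t).const_mul μ).neg).exp
      exact (e1.const_mul A).add (e2.const_mul B)
    rw [h1.deriv]
    ring
  have hu0 : u 0 = 1 := by simp [hu_def, hF]
  have hABsum : A + B = 1 := by
    have := hAB 0
    simp [hu0] at this
    linarith
  -- A ≥ 0
  have hA : 0 ≤ A := by
    by_contra hA
    push_neg at hA
    rcases le_or_gt B 0 with hB | hB
    · linarith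
    · set t₀ : ℝ := Real.log (-A / (2 * B)) / (-(2 * μ)) with ht₀
      set E : ℝ := Real.exp (μ * t₀) with hE
      set E' : ℝ := Real.exp (-(μ * t₀)) with hE'
      have hEpos : 0 < E := Real.exp_pos _
      have hE'pos : 0 < E' := Real.exp_pos _
      have hprod : E * E' = 1 := by rw [hE, hE', ← Real.exp_add]; ring_nf; exact Real.exp_zero
      have hsq : E' * E' = -A / (2 * B) := by
        rw [hE', ← Real.exp_add]
        have : -(μ * t₀) + -(μ * t₀) = Real.log (-A / (2 * B)) := by
          rw [ht₀]; field_simp; ring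
        rw [this, Real.exp_log (div_pos (by linarith) (by linarith))]
      have hupos' : 0 < A * E + B * E' := by rw [hE, hE']; exact hAB t₀ ▸ hupos t₀
      have hkey : (A * E + B * E') * E' = A / 2 := by
        have expand : (A * E + B * E') * E' = A * (E * E') + B * (E' * E') := by ring
        rw [expand, hprod, hsq]
        field_simp
        ring
      have := mul_pos hupos' hE'pos
      rw [hkey] at this
      linarith
  -- B ≥ 0
  have hB : 0 ≤ B := by
    by_contra hB
    push_neg at hB
    rcases le_or_gt A 0 with hA' | hA'
    · linarith
    · set t₀ : ℝ := Real.log (-B / (2 * A)) / (2 * μ) with ht₀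
      set E : ℝ := Real.exp (μ * t₀) with hE
      set E' : ℝ := Real.exp (-(μ * t₀)) with hE'
      have hEpos : 0 < E := Real.exp_pos _
      have hE'pos : 0 < E' := Real.exp_pos _
      have hprod : E * E' = 1 := by rw [hE, hE', ← Real.exp_add]; ring_nf; exact Real.exp_zero
      have hsq : E * E = -B / (2 * A) := by
        rw [hE, ← Real.exp_add]
        have : μ * t₀ + μ * t₀ = Real.log (-B / (2 * A)) := by
          rw [ht₀]; field_simp; ring
        rw [this, Real.exp_log (div_pos (by linarith) (by linarith))]
      have hupos' : 0 < A * E + B * E' := by rw [hE, hE']; exact hAB t₀ ▸ hupos t₀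
      have hkey : (A * E + B * E') * E = B / 2 := by
        have expand : (A * E + B * E') * E = A * (E * E) + B * (E * E') := by ring
        rw [expand, hprod, hsq]
        field_simp
        ring
      have := mul_pos hupos' hEpos
      rw [hkey] at this
      linarith
  rcases eq_or_lt_of_le hA with hA0 | hApos
  · -- A = 0, B = 1 : h = mμ = √(-mλ)
    left
    intro t
    have hB1 : B = 1 := by linarith
    rw [hh t, hud2 t, hAB t, ← hA0, hB1, hc]
    have he := Real.exp_pos (-(μ * t))
    field_simp
    ring
  · rcases eq_or_lt_of_le hB with hB0 | hBpos
    · right; left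
      intro t
      have hA1 : A = 1 := by linarith
      rw [hh t, hud2 t, hAB t, ← hB0, hA1, hc]
      have he := Real.exp_pos (μ * t)
      field_simp
      ring
    · right; right
      refine ⟨Real.log (Real.sqrt (A / B)), fun t => ?_⟩
      set s : ℝ := Real.sqrt (A / B) with hs_def
      have hs : 0 < s := Real.sqrt_pos.mpr (div_pos hApos hBpos)
      have hs2 : s ^ 2 = A / B := Real.sq_sqrt (div_pos hApos hBpos).le
      have hA_eq : A = B * s ^ 2 := by rw [hs2]; field_simp
      have hnegadd : -(μ * t + Real.log s) = -(μ * t) + -(Real.log s) := by ring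
      rw [hh t, hud2 t, hAB t, hc, Real.tanh_eq_sinh_div_cosh, Real.sinh_eq, Real.cosh_eq,
          Real.exp_add, Real.exp_log hs, hnegadd, Real.exp_add, Real.exp_neg, Real.exp_neg,
          Real.exp_log hs, hA_eq]
      set E : ℝ := Real.exp (μ * t) with hE
      have hEpos : 0 < E := Real.exp_pos _
      have hden1 : 0 < B * s ^ 2 * E + B * E⁻¹ :=
        add_pos (mul_pos (mul_pos hBpos (pow_pos hs 2)) hEpos)
          (mul_pos hBpos (inv_pos.mpr hEpos))
      have hden2 : 0 < E * s + E⁻¹ * s⁻¹ :=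
        add_pos (mul_pos hEpos hs) (mul_pos (inv_pos.mpr hEpos) (inv_pos.mpr hs))
      field_simp
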